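/- Let K be a finite-dimensional abstract simplicial complex. The map φ sending a formal convex combination ∑ᵢ tᵢ σᵢ over a chain σ₀ ⊊ σ₁ ⊊ ... ⊊ σ_d of faces of K to ∑ᵢ tᵢ χ_{σᵢ} ∈ ℝ^{(V(K))} is a bijection from the geometric realization of the order complex of the face poset F(K) onto the cubical cone CC(K) = ∪_{σ∈K} I^σ. -/

import Mathlib

/-- An abstract simplicial complex on a vertex type `V`: a family of finite subsets of `V`
closed under taking subsets. -/
structure ASC (V : Type*) where
  faces : Set (Finset V)
  down_closed : ∀ ⦃σ τ : Finset V⦄, σ ∈ faces → τ ⊆ σ → τ ∈ faces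

/-- The indicator vector `χ_σ = ∑_{v ∈ σ} v` in the free real vector space on `V`. -/
noncomputable def chi {V : Type*} (σ : Finset V) : V →₀ ℝ :=
  σ.sum fun v => Finsupp.single v 1

/-- The cubical cone `CC(K) = ∪_{σ ∈ K} I^σ`, where
`I^σ = {∑_{v ∈ σ} t_v v : t_v ∈ [0,1]}`. -/
def CC {V : Type*} (K : ASC V) : Set (V →₀ ℝ) :=
  {f | ∃ σ ∈ K.faces, f.support ⊆ σ ∧ ∀ v : V, 0 ≤ f v ∧ f v ≤ 1}

/-- The geometric realization of the order complex of the face poset `F(K)`: formal convex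
combinations of faces of `K` supported on a chain (w.r.t. inclusion). -/
def GRFaceposet {V : Type*} (K : ASC V) : Set (Finset V →₀ ℝ) :=
  {t | (∀ σ : Finset V, 0 ≤ t σ) ∧ (t.sum fun _ c => c) = 1 ∧
    (∀ σ ∈ t.support, σ ∈ K.faces) ∧ IsChain (· ⊆ ·) (↑t.support : Set (Finset V))}

/-- The map `φ` sending a formal convex combination `∑ tᵢ σᵢ` to `∑ tᵢ χ_{σᵢ}`. -/
noncomputable def phiCC {V : Type*} (t : Finset V →₀ ℝ) : V →₀ ℝ :=
  t.sum fun σ c => c • chi σ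

lemma chi_apply {V : Type*} (σ : Finset V) (v : V) [Decidable (v ∈ σ)] :
    chi σ v = if v ∈ σ then 1 else 0 := by
  classical
  simp only [chi, Finsupp.finset_sum_apply, Finsupp.single_apply]
  rw [Finset.sum_ite_eq' σ v (fun _ => (1:ℝ))]
  congr 1

lemma chi_nonneg {V : Type*} (σ : Finset V) (v : V) : 0 ≤ chi σ v := by
  classical
  rw [chi_apply]; split <;> norm_num

lemma phi_apply {V : Type*} (t : Finset V →₀ ℝ) (v : V) :
    phiCC t v = ∑ σ ∈ t.support, t σ * (chi σ v) := by
  classical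
  simp [phiCC, Finsupp.sum, Finsupp.finset_sum_apply]

lemma phi_add {V : Type*} (t s : Finset V →₀ ℝ) :
    phiCC (t + s) = phiCC t + phiCC s := by
  classical
  exact Finsupp.sum_add_index' (by simp) (fun σ c d => add_smul c d (chi σ))

lemma phi_single {V : Type*} (σ : Finset V) (c : ℝ) :
    phiCC (Finsupp.single σ c) = c • chi σ := by
  classical
  exact Finsupp.sum_single_index (by simp)

lemma phi_nonneg {V : Type*} {t : Finset V →₀ ℝ} (h : ∀ σ, 0 ≤ t σ) (v : V) :
    0 ≤ phiCC t v := by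
  rw [phi_apply]
  exact Finset.sum_nonneg fun σ _ => mul_nonneg (h σ) (chi_nonneg σ v)

lemma phi_ge {V : Type*} {t : Finset V →₀ ℝ} (h : ∀ σ, 0 ≤ t σ) {σ : Finset V}
    (hσ : σ ∈ t.support) {v : V} (hv : v ∈ σ) : t σ ≤ phiCC t v := by
  classical
  rw [phi_apply]
  have : t σ = t σ * chi σ v := by rw [chi_apply]; simp [hv]
  rw [this]
  exact Finset.single_le_sum (fun τ _ => mul_nonneg (h τ) (chi_nonneg τ v)) hσ

lemma phi_eq_of_unique {V : Type*} {t : Finset V →₀ ℝ} {σ : Finset V} {v : V}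
    (hv : v ∈ σ) (huniq : ∀ τ ∈ t.support, v ∈ τ → τ = σ) :
    phiCC t v = t σ := by
  classical
  rw [phi_apply]
  rw [Finset.sum_eq_single σ]
  · rw [chi_apply]; simp [hv]
  · intro τ hτ hne
    rw [chi_apply]
    have : v ∉ τ := fun hvτ => hne (huniq τ hτ hvτ)
    simp [this]
  · intro h
    simp [Finsupp.notMem_support_iff.mp h]

lemma phi_pos_iff {V : Type*} {t : Finset V →₀ ℝ} (h : ∀ σ, 0 ≤ t σ) (v : V) :
    phiCC t v ≠ 0 ↔ ∃ σ ∈ t.support, v ∈ σ := by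
  classical
  constructor
  · intro hne
    rw [phi_apply] at hne
    obtain ⟨σ, hσ, hterm⟩ := Finset.exists_ne_zero_of_sum_ne_zero hne
    refine ⟨σ, hσ, ?_⟩
    by_contra hv
    rw [chi_apply] at hterm
    simp [hv] at hterm
  · rintro ⟨σ, hσ, hv⟩
    have h1 : 0 < t σ := lt_of_le_of_ne (h σ) (Ne.symm (Finsupp.mem_support_iff.mp hσ))
    exact ne_of_gt (lt_of_lt_of_le h1 (phi_ge h hσ hv))

/-- existence of a maximal face pоint -/
lemma exists_top {V : Type*} {t : Finset V →₀ ℝ}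
    (hch : IsChain (· ⊆ ·) (↑t.support : Set (Finset V))) (hne : t.support.Nonempty) :
    ∃ σ ∈ t.support, ∀ τ ∈ t.support, τ ⊆ σ := by
  classical
  obtain ⟨σ, hσ, hmax⟩ := t.support.exists_maximal hne
  refine ⟨σ, hσ, fun τ hτ => ?_⟩
  rcases eq_or_ne τ σ with rfl | hne'
  · exact subset_rfl
  · rcases hch (by exact_mod_cast hτ) (by exact_mod_cast hσ) hne' with h | h
    · exact h
    · exact hmax hτ h

lemma exists_lonely {V : Type*} {t : Finset V →₀ ℝ}
    (hch : IsChain (· ⊆ ·) (↑t.support : Set (Finset V)))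
    {σ : Finset V} (hσ : σ ∈ t.support) (hσne : σ.Nonempty)
    (htop : ∀ τ ∈ t.support, τ ⊆ σ) :
    ∃ v ∈ σ, ∀ τ ∈ t.support, v ∈ τ → τ = σ := by
  classical
  rcases Finset.eq_empty_or_nonempty (t.support.erase σ) with he | hne
  · obtain ⟨v, hv⟩ := hσne
    refine ⟨v, hv, fun τ hτ _ => ?_⟩
    by_contra hne'
    exact absurd (Finset.mem_erase.mpr ⟨hne', hτ⟩) (by simp [he])
  · have hch' : IsChain (· ⊆ ·) (↑(t.support.erase σ) : Set (Finset V)) :=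
      hch.mono (by intro x hx; exact_mod_cast Finset.erase_subset σ t.support (by exact_mod_cast hx))
    obtain ⟨τ, hτ, hmax⟩ := (t.support.erase σ).exists_maximal hne
    have hτs : τ ∈ t.support := Finset.mem_of_mem_erase hτ
    have hτne : τ ≠ σ := (Finset.mem_erase.mp hτ).1
    have hss : τ ⊂ σ := lt_of_le_of_ne (Finset.le_iff_subset.mpr (htop τ hτs)) hτne
    obtain ⟨v, hvσ, hvτ⟩ := Finset.exists_of_ssubset hss
    refine ⟨v, hvσ, fun ρ hρ hvρ => ?_⟩
    by_contra hρne
    have hρe : ρ ∈ t.support.erase σ := Finset.mem_erase.mpr ⟨hρne, hρ⟩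
    rcases eq_or_ne ρ τ with rfl | hρτ
    · exact hvτ hvρ
    · rcases hch' (by exact_mod_cast hρe) (by exact_mod_cast hτ) hρτ with h | h
      · exact hvτ (h hvρ)
      · exact absurd (Finset.Subset.antisymm (hmax hρe h) h) hρτ

lemma phi_zero_imp {V : Type*} {t : Finset V →₀ ℝ} (h : ∀ σ, 0 ≤ t σ)
    (hempty : (∅ : Finset V) ∉ t.support) (hz : phiCC t = 0) : t = 0 := by
  classical
  by_contra hne
  obtain ⟨σ, hσ⟩ := Finsupp.support_nonempty_iff.mpr hne
  have hσne : σ.Nonempty := Finset.nonempty_of_ne_empty (fun hh => hempty (hh ▸ hσ))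
  obtain ⟨v, hv⟩ := hσne
  have h1 : 0 < t σ := lt_of_le_of_ne (h σ) (Ne.symm (Finsupp.mem_support_iff.mp hσ))
  have := lt_of_lt_of_le h1 (phi_ge h hσ hv)
  rw [hz] at this
  simp at this

lemma inj_aux {V : Type*} : ∀ (n : ℕ) (t t' : Finset V →₀ ℝ),
    t.support.card ≤ n →
    (∀ σ, 0 ≤ t σ) → (∀ σ, 0 ≤ t' σ) →
    IsChain (· ⊆ ·) (↑t.support : Set (Finset V)) →
    IsChain (· ⊆ ·) (↑t'.support : Set (Finset V)) →
    (∅ : Finset V) ∉ t.support → (∅ : Finset V) ∉ t'.support →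
    phiCC t = phiCC t' → t = t' := by
  classical
  intro n
  induction n with
  | zero =>
    intro t t' hcard h h' hch hch' he he' heq
    have ht : t = 0 := by
      have : t.support = ∅ := Finset.card_eq_zero.mp (Nat.le_zero.mp hcard)
      exact Finsupp.support_eq_empty.mp this
    subst ht
    have : phiCC t' = 0 := by rw [← heq]; simp [phiCC]
    exact (phi_zero_imp h' he' this).symm
  | succ n ih =>
    intro t t' hcard h h' hch hch' he he' heq
    rcases Finset.eq_empty_or_nonempty t.support with hsupp | hsupp
    · have ht : t = 0 := Finsupp.support_eq_empty.mp hsupp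
      subst ht
      have : phiCC t' = 0 := by rw [← heq]; simp [phiCC]
      exact (phi_zero_imp h' he' this).symm
    · obtain ⟨σ, hσ, htop⟩ := exists_top hch hsupp
      have hσne : σ.Nonempty := Finset.nonempty_of_ne_empty (fun hh => he (hh ▸ hσ))
      -- t' also nonempty support, with same top
      have hsupp' : t'.support.Nonempty := by
        by_contra hc
        have ht' : t' = 0 := Finsupp.support_eq_empty.mp (Finset.not_nonempty_iff_eq_empty.mp hc)
        rw [ht'] at heq
        have : phiCC t = 0 := by rw [heq]; simp [phiCC]
        have := phi_zero_imp h he this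
        rw [this] at hsupp
        simp at hsupp
      obtain ⟨σ', hσ', htop'⟩ := exists_top hch' hsupp'
      have hσne' : σ'.Nonempty := Finset.nonempty_of_ne_empty (fun hh => he' (hh ▸ hσ'))
      have hσeq : σ' = σ := by
        apply Finset.ext
        intro v
        have e1 : phiCC t v ≠ 0 ↔ v ∈ σ := by
          rw [phi_pos_iff h]
          exact ⟨fun ⟨τ, hτ, hvτ⟩ => htop τ hτ hvτ, fun hv => ⟨σ, hσ, hv⟩⟩
        have e2 : phiCC t' v ≠ 0 ↔ v ∈ σ' := by
          rw [phi_pos_iff h']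
          exact ⟨fun ⟨τ, hτ, hvτ⟩ => htop' τ hτ hvτ, fun hv => ⟨σ', hσ', hv⟩⟩
        rw [← e1, ← e2, heq]
      subst hσeq
      -- weights at top are equal
      obtain ⟨v₀, hv₀, huniq⟩ := exists_lonely hch hσ hσne htop
      obtain ⟨v₁, hv₁, huniq'⟩ := exists_lonely hch' hσ' hσne' htop'
      have hle1 : t' σ' ≤ t σ' := by
        calc t' σ' ≤ phiCC t' v₀ := phi_ge h' hσ' hv₀
        _ = phiCC t v₀ := by rw [heq]
        _ = t σ' := phi_eq_of_unique hv₀ huniq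
      have hle2 : t σ' ≤ t' σ' := by
        calc t σ' ≤ phiCC t v₁ := phi_ge h hσ hv₁
        _ = phiCC t' v₁ := by rw [heq]
        _ = t' σ' := phi_eq_of_unique hv₁ huniq'
      have haa : t σ' = t' σ' := le_antisymm hle2 hle1
      -- peel off the top
      have hdecomp : t.erase σ' + Finsupp.single σ' (t σ') = t := Finsupp.erase_add_single σ' t
      have hdecomp' : t'.erase σ' + Finsupp.single σ' (t' σ') = t' := Finsupp.erase_add_single σ' t'
      have heq2 : phiCC (t.erase σ') = phiCC (t'.erase σ') := by
        have k1 : phiCC (t.erase σ') + (t σ') • chi σ' = phiCC (t'.erase σ') + (t' σ') • chi σ' := by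
          rw [← phi_single σ' (t σ'), ← phi_single σ' (t' σ'), ← phi_add, ← phi_add,
            hdecomp, hdecomp', heq]
        rw [haa] at k1
        exact add_right_cancel k1
      have hsub : (t.erase σ').support ⊆ t.support := by
        rw [Finsupp.support_erase]
        exact Finset.erase_subset _ _
      have hsub' : (t'.erase σ').support ⊆ t'.support := by
        rw [Finsupp.support_erase]
        exact Finset.erase_subset _ _
      have hcards : (t.erase σ').support.card ≤ n := by
        rw [Finsupp.support_erase]
        have := Finset.card_erase_of_mem hσ
        omega
      have key := ih (t.erase σ') (t'.erase σ') hcards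
        (fun τ => by
          rcases eq_or_ne τ σ' with rfl | hne
          · simp [Finsupp.erase_same]
          · rw [Finsupp.erase_ne hne]; exact h τ)
        (fun τ => by
          rcases eq_or_ne τ σ' with rfl | hne
          · simp [Finsupp.erase_same]
          · rw [Finsupp.erase_ne hne]; exact h' τ)
        (hch.mono (by exact_mod_cast hsub))
        (hch'.mono (by exact_mod_cast hsub'))
        (fun hc => he (hsub hc)) (fun hc => he' (hsub' hc)) heq2
      rw [← hdecomp, ← hdecomp', key, haa]

lemma chi_empty {V : Type*} : chi (∅ : Finset V) = 0 := by simp [chi]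

lemma chi_le_one {V : Type*} (σ : Finset V) (v : V) : chi σ v ≤ 1 := by
  classical
  rw [chi_apply]; split <;> norm_num

lemma sum_add_eq {V : Type*} (t s : Finset V →₀ ℝ) :
    ((t + s).sum fun _ c => c) = (t.sum fun _ c => c) + (s.sum fun _ c => c) :=
  Finsupp.sum_add_index' (fun _ => rfl) (fun _ _ _ => rfl)

lemma sum_single_eq {V : Type*} (σ : Finset V) (c : ℝ) :
    ((Finsupp.single σ c).sum fun _ c => c) = c :=
  Finsupp.sum_single_index rfl

lemma surj_aux {V : Type*} : ∀ (n : ℕ) (f : V →₀ ℝ), f.support.card ≤ n →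
    (∀ v, 0 ≤ f v) →
    ∃ t : Finset V →₀ ℝ, (∀ σ, 0 ≤ t σ) ∧
      IsChain (· ⊆ ·) (↑t.support : Set (Finset V)) ∧
      (∀ σ ∈ t.support, σ.Nonempty ∧ σ ⊆ f.support) ∧
      phiCC t = f ∧
      ((t.sum fun _ c => c) = 0 ∨ ∃ v ∈ f.support, (t.sum fun _ c => c) = f v) := by
  classical
  intro n
  induction n with
  | zero =>
    intro f hcard hf
    have hs : f.support = ∅ := Finset.card_eq_zero.mp (Nat.le_zero.mp hcard)
    have hf0 : f = 0 := Finsupp.support_eq_empty.mp hs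
    exact ⟨0, by simp, by simp [IsChain], by simp, by simp [phiCC, hf0], Or.inl (by simp)⟩
  | succ n ih =>
    intro f hcard hf
    rcases Finset.eq_empty_or_nonempty f.support with hs | hs
    · have hf0 : f = 0 := Finsupp.support_eq_empty.mp hs
      exact ⟨0, by simp, by simp [IsChain], by simp, by simp [phiCC, hf0], Or.inl (by simp)⟩
    · -- peel off the minimum value on the support
      obtain ⟨v₀, hv₀, hmin⟩ := f.support.exists_min_image f hs
      set a : ℝ := f v₀ with ha
      have ha0 : 0 < a := lt_of_le_of_ne (hf v₀) (Ne.symm (Finsupp.mem_support_iff.mp hv₀))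
      set f' : V →₀ ℝ := f - a • chi f.support with hf'def
      have hf'app : ∀ v, v ∈ f.support → f' v = f v - a := by
        intro v hv
        simp only [hf'def, Finsupp.sub_apply, Finsupp.smul_apply, chi_apply, hv, if_pos,
          smul_eq_mul, mul_one]
      have hf'app0 : ∀ v, v ∉ f.support → f' v = 0 := by
        intro v hv
        have : f v = 0 := Finsupp.notMem_support_iff.mp hv
        simp only [hf'def, Finsupp.sub_apply, Finsupp.smul_apply, chi_apply, hv, if_neg,
          not_false_iff, smul_eq_mul, mul_zero, this, sub_zero]
      have hf'nn : ∀ v, 0 ≤ f' v := by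
        intro v
        by_cases hv : v ∈ f.support
        · rw [hf'app v hv]; linarith [hmin v hv]
        · rw [hf'app0 v hv]
      have hsub : f'.support ⊆ f.support := by
        intro v hv
        by_contra hc
        exact (Finsupp.mem_support_iff.mp hv) (hf'app0 v hc)
      have hv₀not : v₀ ∉ f'.support := by
        rw [Finsupp.mem_support_iff]
        push_neg
        rw [hf'app v₀ hv₀]; ring
      have hcard' : f'.support.card ≤ n := by
        have hss : f'.support ⊂ f.support := ⟨hsub, fun hc => hv₀not (hc hv₀)⟩
        have := Finset.card_lt_card hss
        omega
      obtain ⟨t', ht'nn, ht'ch, ht'supp, ht'phi, ht'sum⟩ := ih f' hcard' hf'nn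
      refine ⟨Finsupp.single f.support a + t', ?_, ?_, ?_, ?_, ?_⟩
      · intro σ
        rw [Finsupp.add_apply]
        have : 0 ≤ Finsupp.single f.support a σ := by
          rw [Finsupp.single_apply]; split <;> [exact le_of_lt ha0; rfl]
        linarith [ht'nn σ]
      · apply IsChain.mono _ (ht'ch.insert (a := f.support) ?_)
        · intro x hx
          have hx' : x ∈ (Finsupp.single f.support a + t').support := hx
          have := Finsupp.support_add hx'
          rw [Finset.mem_union] at this
          rcases this with h1 | h2
          · left
            have := Finsupp.support_single_subset h1
            simpa using this
          · right; exact h2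
        · intro σ hσ _
          right
          exact (ht'supp σ (by exact_mod_cast hσ)).2.trans hsub
      · intro σ hσ
        have := Finsupp.support_add hσ
        rw [Finset.mem_union] at this
        rcases this with h1 | h2
        · have h1' : σ = f.support := by simpa using Finsupp.support_single_subset h1
          subst h1'
          exact ⟨hs, subset_rfl⟩
        · exact ⟨(ht'supp σ h2).1, (ht'supp σ h2).2.trans hsub⟩
      · rw [phi_add, phi_single, ht'phi, hf'def]
        abel
      · right
        rw [sum_add_eq, sum_single_eq]
        rcases ht'sum with h0 | ⟨v, hv, hveq⟩
        · exact ⟨v₀, hv₀, by rw [h0]; ring⟩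
        · have hvf : v ∈ f.support := hsub hv
          refine ⟨v, hvf, ?_⟩
          rw [hveq, hf'app v hvf]; ring

/-- For a finite-dimensional abstract simplicial complex `K`, the map
`φ : ∑ᵢ tᵢ σᵢ ↦ ∑ᵢ tᵢ χ_{σᵢ}` is a bijection from the geometric realization of the order
complex of the face poset `F(K)` onto the cubical cone `CC(K)`. -/
theorem stmt16 {V : Type*} (K : ASC V)
    (hfd : ∃ n : ℕ, ∀ σ ∈ K.faces, σ.card ≤ n) :
    Set.BijOn phiCC (GRFaceposet K) (CC K) := by
  classical
  refine ⟨?_, ?_, ?_⟩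
  · -- MapsTo
    rintro t ⟨hnn, hsum, hfaces, hch⟩
    have hne : t.support.Nonempty := by
      by_contra hc
      have ht0 : t = 0 :=
        Finsupp.support_eq_empty.mp (Finset.not_nonempty_iff_eq_empty.mp hc)
      rw [ht0] at hsum
      simp at hsum
    obtain ⟨σs, hσs, htop⟩ := exists_top hch hne
    refine ⟨σs, hfaces σs hσs, ?_, ?_⟩
    · intro v hv
      have : phiCC t v ≠ 0 := Finsupp.mem_support_iff.mp hv
      obtain ⟨σ, hσ, hvσ⟩ := (phi_pos_iff hnn v).mp this
      exact htop σ hσ hvσ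
    · intro v
      refine ⟨phi_nonneg hnn v, ?_⟩
      rw [phi_apply]
      calc ∑ σ ∈ t.support, t σ * chi σ v ≤ ∑ σ ∈ t.support, t σ :=
            Finset.sum_le_sum fun σ _ => mul_le_of_le_one_right (hnn σ) (chi_le_one σ v)
        _ = 1 := by simpa [Finsupp.sum] using hsum
  · -- InjOn
    rintro t ⟨hnn, hsum, _, hch⟩ t' ⟨hnn', hsum', _, hch'⟩ heq
    set u := t.erase ∅ with hu_def
    set u' := t'.erase ∅ with hu'_def
    have hdec : u + Finsupp.single ∅ (t ∅) = t := Finsupp.erase_add_single ∅ t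
    have hdec' : u' + Finsupp.single ∅ (t' ∅) = t' := Finsupp.erase_add_single ∅ t'
    have hphiu : phiCC u = phiCC t := by
      conv_rhs => rw [← hdec]
      rw [phi_add, phi_single, chi_empty]
      simp
    have hphiu' : phiCC u' = phiCC t' := by
      conv_rhs => rw [← hdec']
      rw [phi_add, phi_single, chi_empty]
      simp
    have hunn : ∀ σ, 0 ≤ u σ := by
      intro σ
      rcases eq_or_ne σ (∅ : Finset V) with rfl | hne
      · simp [hu_def, Finsupp.erase_same]
      · rw [hu_def, Finsupp.erase_ne hne]; exact hnn σ
    have hunn' : ∀ σ, 0 ≤ u' σ := by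
      intro σ
      rcases eq_or_ne σ (∅ : Finset V) with rfl | hne
      · simp [hu'_def, Finsupp.erase_same]
      · rw [hu'_def, Finsupp.erase_ne hne]; exact hnn' σ
    have husub : u.support ⊆ t.support := by
      rw [hu_def, Finsupp.support_erase]; exact Finset.erase_subset _ _
    have husub' : u'.support ⊆ t'.support := by
      rw [hu'_def, Finsupp.support_erase]; exact Finset.erase_subset _ _
    have hueq : u = u' := by
      apply inj_aux u.support.card u u' le_rfl hunn hunn'
        (hch.mono (by exact_mod_cast husub)) (hch'.mono (by exact_mod_cast husub'))
      · rw [hu_def, Finsupp.support_erase]; exact Finset.notMem_erase _ _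
      · rw [hu'_def, Finsupp.support_erase]; exact Finset.notMem_erase _ _
      · rw [hphiu, hphiu', heq]
    have hts : (t.sum fun _ c => c) = (u.sum fun _ c => c) + t ∅ := by
      conv_lhs => rw [← hdec]
      rw [sum_add_eq, sum_single_eq]
    have hts' : (t'.sum fun _ c => c) = (u'.sum fun _ c => c) + t' ∅ := by
      conv_lhs => rw [← hdec']
      rw [sum_add_eq, sum_single_eq]
    have hts0 : t ∅ = t' ∅ := by
      rw [hsum] at hts
      rw [hsum'] at hts'
      rw [hueq] at hts
      linarith
    rw [← hdec, ← hdec', hueq, hts0]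
  · -- SurjOn
    rintro f ⟨σ₀, hσ₀, hsupp, hbnd⟩
    obtain ⟨t, htnn, htch, htsupp, htphi, htsum⟩ :=
      surj_aux f.support.card f le_rfl (fun v => (hbnd v).1)
    have hsle : (t.sum fun _ c => c) ≤ 1 := by
      rcases htsum with h | ⟨v, _, h⟩
      · rw [h]; norm_num
      · rw [h]; exact (hbnd v).2
    set c : ℝ := 1 - (t.sum fun _ c => c) with hc_def
    have hc0 : 0 ≤ c := by simp [hc_def]; linarith
    set T : Finset V →₀ ℝ := t + Finsupp.single ∅ c with hT_def
    have hTsupp : ∀ σ ∈ T.support, σ ∈ insert (∅ : Finset V) t.support := by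
      intro σ hσ
      have := Finsupp.support_add hσ
      rw [Finset.mem_union] at this
      rcases this with h1 | h2
      · exact Finset.mem_insert_of_mem h1
      · have : σ = ∅ := by simpa using Finsupp.support_single_subset h2
        exact this ▸ Finset.mem_insert_self _ _
    refine ⟨T, ⟨?_, ?_, ?_, ?_⟩, ?_⟩
    · intro σ
      rw [hT_def, Finsupp.add_apply]
      have : 0 ≤ Finsupp.single (∅ : Finset V) c σ := by
        rw [Finsupp.single_apply]; split <;> [exact hc0; rfl]
      linarith [htnn σ]
    · rw [hT_def, sum_add_eq, sum_single_eq, hc_def]; ring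
    · intro σ hσ
      rcases Finset.mem_insert.mp (hTsupp σ hσ) with rfl | h
      · exact K.down_closed hσ₀ (Finset.empty_subset σ₀)
      · exact K.down_closed hσ₀ (((htsupp σ h).2).trans hsupp)
    · apply IsChain.mono _ (htch.insert (a := (∅ : Finset V)) ?_)
      · intro x hx
        exact_mod_cast hTsupp x (by exact_mod_cast hx)
      · intro σ _ _
        left
        exact Finset.empty_subset σ
    · rw [hT_def, phi_add, phi_single, chi_empty, htphi]
      simp
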